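/- arXiv:1912.12073 — 5 statements merged into one kernel-verified Lean document; each statement's English description precedes it below -/
import Mathlib

section
/- For any real vectors $(x_i)_{i=1}^n$ and $(y_i)_{i=1}^n$ and any real number $\gamma$ with $0 < \gamma < 1$, it holds that $\sum_{i=1}^n \sum_{j=1}^n \gamma^{|i-j|} x_i y_j \le \frac{2}{1-\gamma} \left(\sum_{i=1}^n x_i^2\right)^{1/2} \left(\sum_{j=1}^n y_j^2\right)^{1/2}$. -/
lemma aux_geom (n : ℕ) (γ : ℝ) (h0 : 0 < γ) (h1 : γ < 1) :
    ∑ k ∈ Finset.range n, γ ^ k ≤ 1 / (1 - γ) := by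
  have hne : γ ≠ 1 := ne_of_lt h1
  rw [geom_sum_eq hne]
  have h2 : (γ ^ n - 1) / (γ - 1) = (1 - γ ^ n) / (1 - γ) := by
    rw [div_eq_div_iff (by linarith) (by linarith)]; ring
  rw [h2]
  have hp : (0:ℝ) ≤ γ ^ n := pow_nonneg h0.le n
  gcongr
  · linarith

lemma aux_inj_sum (n : ℕ) (γ : ℝ) (h0 : 0 < γ) (h1 : γ < 1)
    (s : Finset (Fin n)) (e : Fin n → ℕ) (he : ∀ j ∈ s, e j < n)
    (hinj : ∀ j1 ∈ s, ∀ j2 ∈ s, e j1 = e j2 → j1 = j2) :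
    ∑ j ∈ s, γ ^ (e j) ≤ 1 / (1 - γ) := by
  have h : ∑ k ∈ s.image e, γ ^ k = ∑ j ∈ s, γ ^ (e j) := Finset.sum_image hinj
  rw [← h]
  calc ∑ k ∈ s.image e, γ ^ k ≤ ∑ k ∈ Finset.range n, γ ^ k := by
        apply Finset.sum_le_sum_of_subset_of_nonneg
        · intro k hk
          simp only [Finset.mem_image] at hk
          obtain ⟨j, hj, rfl⟩ := hk
          exact Finset.mem_range.mpr (he j hj)
        · intro k _ _
          exact pow_nonneg h0.le k
    _ ≤ 1 / (1 - γ) := aux_geom n γ h0 h1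

lemma aux_row (n : ℕ) (γ : ℝ) (h0 : 0 < γ) (h1 : γ < 1) (i : Fin n) :
    ∑ j : Fin n, γ ^ ((i : ℤ) - (j : ℤ)).natAbs ≤ 2 / (1 - γ) := by
  classical
  rw [← Finset.sum_filter_add_sum_filter_not Finset.univ (fun j : Fin n => (j:ℕ) ≤ (i:ℕ))]
  have hg : (2:ℝ) / (1 - γ) = 1 / (1 - γ) + 1 / (1 - γ) := by ring
  rw [hg]
  apply add_le_add
  · apply aux_inj_sum n γ h0 h1 _ (fun j => ((i : ℤ) - (j : ℤ)).natAbs)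
    · intro j hj
      have := j.isLt; have := i.isLt
      simp only [Finset.mem_filter] at hj
      omega
    · intro j1 hj1 j2 hj2 hE
      simp only [Finset.mem_filter] at hj1 hj2
      have h1' := hj1.2; have h2' := hj2.2
      apply Fin.ext
      omega
  · apply aux_inj_sum n γ h0 h1 _ (fun j => ((i : ℤ) - (j : ℤ)).natAbs)
    · intro j hj
      have := j.isLt; have := i.isLt
      omega
    · intro j1 hj1 j2 hj2 hE
      simp only [Finset.mem_filter, not_le] at hj1 hj2
      have h1' := hj1.2; have h2' := hj2.2
      apply Fin.ext
      omega

theorem stmt_1 (n : ℕ) (x y : Fin n → ℝ) (γ : ℝ) (h0 : 0 < γ) (h1 : γ < 1) :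
    ∑ i : Fin n, ∑ j : Fin n, γ ^ ((i : ℤ) - (j : ℤ)).natAbs * x i * y j ≤
      (2 / (1 - γ)) * Real.sqrt (∑ i : Fin n, x i ^ 2) *
        Real.sqrt (∑ j : Fin n, y j ^ 2) := by
  classical
  set X := ∑ i : Fin n, x i ^ 2 with hX
  set Y := ∑ j : Fin n, y j ^ 2 with hY
  have hXnn : 0 ≤ X := Finset.sum_nonneg fun i _ => sq_nonneg _
  have hYnn : 0 ≤ Y := Finset.sum_nonneg fun j _ => sq_nonneg _
  have hγ : 0 < 1 - γ := by linarith
  rcases eq_or_lt_of_le hXnn with hX0 | hXpos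
  · -- X = 0 so x ≡ 0
    have hx : ∀ i, x i = 0 := by
      intro i
      have := (Finset.sum_eq_zero_iff_of_nonneg (fun i _ => sq_nonneg (x i))).mp hX0.symm i (Finset.mem_univ i)
      exact pow_eq_zero_iff (n := 2) (by norm_num) |>.mp this
    have : ∀ i : Fin n, ∑ j : Fin n, γ ^ ((i : ℤ) - (j : ℤ)).natAbs * x i * y j = 0 := by
      intro i; apply Finset.sum_eq_zero; intro j _; rw [hx i]; ring
    rw [Finset.sum_congr rfl (fun i _ => this i), Finset.sum_const, smul_zero]
    positivity
  rcases eq_or_lt_of_le hYnn with hY0 | hYpos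
  · have hy : ∀ j, y j = 0 := by
      intro j
      have := (Finset.sum_eq_zero_iff_of_nonneg (fun j _ => sq_nonneg (y j))).mp hY0.symm j (Finset.mem_univ j)
      exact pow_eq_zero_iff (n := 2) (by norm_num) |>.mp this
    have : ∀ i : Fin n, ∑ j : Fin n, γ ^ ((i : ℤ) - (j : ℤ)).natAbs * x i * y j = 0 := by
      intro i; apply Finset.sum_eq_zero; intro j _; rw [hy j]; ring
    rw [Finset.sum_congr rfl (fun i _ => this i), Finset.sum_const, smul_zero]
    positivity
  set a := Real.sqrt X with ha
  set b := Real.sqrt Y with hb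
  have hapos : 0 < a := Real.sqrt_pos.mpr hXpos
  have hbpos : 0 < b := Real.sqrt_pos.mpr hYpos
  have ha2 : a ^ 2 = X := Real.sq_sqrt hXnn
  have hb2 : b ^ 2 = Y := Real.sq_sqrt hYnn
  set s : ℝ := b / a with hs
  have hspos : 0 < s := div_pos hbpos hapos
  have hpt : ∀ i j : Fin n, γ ^ ((i : ℤ) - (j : ℤ)).natAbs * x i * y j ≤
      γ ^ ((i : ℤ) - (j : ℤ)).natAbs * ((s * x i ^ 2 + y j ^ 2 / s) / 2) := by
    intro i j
    have hk : (0:ℝ) ≤ γ ^ ((i : ℤ) - (j : ℤ)).natAbs := pow_nonneg h0.le _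
    rw [mul_assoc]
    apply mul_le_mul_of_nonneg_left _ hk
    have h2 : (s * x i ^ 2 + y j ^ 2 / s) / 2 = (s ^ 2 * x i ^ 2 + y j ^ 2) / (2 * s) := by
      field_simp
    rw [h2, le_div_iff₀ (by positivity)]
    nlinarith [sq_nonneg (s * x i - y j)]
  have expand : ∀ i j : Fin n, γ ^ ((i : ℤ) - (j : ℤ)).natAbs * ((s * x i ^ 2 + y j ^ 2 / s) / 2)
      = (s / 2) * (γ ^ ((i : ℤ) - (j : ℤ)).natAbs * x i ^ 2)
        + (1 / (2 * s)) * (γ ^ ((i : ℤ) - (j : ℤ)).natAbs * y j ^ 2) := by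
    intro i j
    field_simp
  have T1 : ∑ i : Fin n, ∑ j : Fin n, γ ^ ((i : ℤ) - (j : ℤ)).natAbs * x i ^ 2
      ≤ X * (2 / (1 - γ)) := by
    rw [hX, Finset.sum_mul]
    apply Finset.sum_le_sum; intro i _
    rw [show ∑ j : Fin n, γ ^ ((i : ℤ) - (j : ℤ)).natAbs * x i ^ 2
        = x i ^ 2 * ∑ j : Fin n, γ ^ ((i : ℤ) - (j : ℤ)).natAbs by
      rw [Finset.mul_sum]; apply Finset.sum_congr rfl; intro j _; ring]
    exact mul_le_mul_of_nonneg_left (aux_row n γ h0 h1 i) (sq_nonneg _)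
  have T2 : ∑ i : Fin n, ∑ j : Fin n, γ ^ ((i : ℤ) - (j : ℤ)).natAbs * y j ^ 2
      ≤ Y * (2 / (1 - γ)) := by
    rw [Finset.sum_comm, hY, Finset.sum_mul]
    apply Finset.sum_le_sum; intro j _
    rw [show ∑ i : Fin n, γ ^ ((i : ℤ) - (j : ℤ)).natAbs * y j ^ 2
        = y j ^ 2 * ∑ i : Fin n, γ ^ ((j : ℤ) - (i : ℤ)).natAbs by
      rw [Finset.mul_sum]; apply Finset.sum_congr rfl; intro i _
      rw [show ((i : ℤ) - (j : ℤ)).natAbs = ((j : ℤ) - (i : ℤ)).natAbs by omega]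
      ring]
    exact mul_le_mul_of_nonneg_left (aux_row n γ h0 h1 j) (sq_nonneg _)
  calc ∑ i : Fin n, ∑ j : Fin n, γ ^ ((i : ℤ) - (j : ℤ)).natAbs * x i * y j
      ≤ ∑ i : Fin n, ∑ j : Fin n, γ ^ ((i : ℤ) - (j : ℤ)).natAbs * ((s * x i ^ 2 + y j ^ 2 / s) / 2) := by
        apply Finset.sum_le_sum; intro i _; apply Finset.sum_le_sum; intro j _; exact hpt i j
    _ = (s / 2) * (∑ i : Fin n, ∑ j : Fin n, γ ^ ((i : ℤ) - (j : ℤ)).natAbs * x i ^ 2)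
        + (1 / (2 * s)) * (∑ i : Fin n, ∑ j : Fin n, γ ^ ((i : ℤ) - (j : ℤ)).natAbs * y j ^ 2) := by
        simp only [expand, Finset.sum_add_distrib, Finset.mul_sum]
    _ ≤ (s / 2) * (X * (2 / (1 - γ))) + (1 / (2 * s)) * (Y * (2 / (1 - γ))) := by
        apply add_le_add
        · exact mul_le_mul_of_nonneg_left T1 (by positivity)
        · exact mul_le_mul_of_nonneg_left T2 (by positivity)
    _ = (2 / (1 - γ)) * a * b := by
        rw [← ha2, ← hb2, hs]
        field_simp
        ring
end

section
/- Let $V$ be a finite-dimensional real inner product space with inner product $a(\cdot,\cdot)$ induced by a symmetric positive definite operator $A$, i.e. $a(u,v) = (Au,v)$. Let $V = \sum_{i=0}^J V_i$ be a decomposition into subspaces, and suppose there is a constant $C_1 > 0$ such that for every choice of $u_i \in V_i$, $\|\sum_{i=0}^J u_i\|_A^2 \le C_1 \sum_{i=0}^J \|u_i\|_A^2$, where $\|u\|_A^2 = a(u,u)$. Suppose further there is $C_2 > 0$ such that every $v \in V$ admits a decomposition $v = \sum_{i=0}^J v_i$ with $v_i \in V_i$ and $\sum_{i=0}^J \|v_i\|_A^2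 \le C_2 \|v\|_A^2$. If $B := \sum_{i=0}^J P_i A^{-1}$ where $P_i$ is the $a$-orthogonal projection onto $V_i$ (i.e., the additive Schwarz operator with exact subspace solvers), then all eigenvalues $\lambda$ of $BA$ satisfy $C_2^{-1} \le \lambda \le C_1$, and hence the condition number satisfies $\kappa(BA) \le C_1 C_2$. -/
open scoped RealInnerProductSpace

theorem stmt_3 {V : Type*} [NormedAddCommGroup V] [InnerProductSpace ℝ V]
    [FiniteDimensional ℝ V]
    (J : ℕ) (A : V →ₗ[ℝ] V)
    (hAsym : ∀ u v : V, ⟪A u, v⟫ = ⟪u, A v⟫)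
    (hApos : ∀ u : V, u ≠ 0 → 0 < ⟪A u, u⟫)
    (Vi : Fin (J + 1) → Submodule ℝ V)
    (P : Fin (J + 1) → V →ₗ[ℝ] V)
    (hPrange : ∀ i, ∀ u : V, P i u ∈ Vi i)
    (hPproj : ∀ i, ∀ w ∈ Vi i, P i w = w)
    (hPorth : ∀ i (u : V), ∀ w ∈ Vi i, ⟪A (P i u - u), w⟫ = 0)
    (C₁ C₂ : ℝ) (hC₁ : 0 < C₁) (hC₂ : 0 < C₂)
    (hupper : ∀ w : ∀ i, Vi i,
      ⟪A (∑ i, ((w i : V))), ∑ i, ((w i : V))⟫ ≤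
        C₁ * ∑ i, ⟪A ((w i : V)), ((w i : V))⟫)
    (hstable : ∀ v : V, ∃ w : ∀ i, Vi i, (∑ i, ((w i : V))) = v ∧
        ∑ i, ⟪A ((w i : V)), ((w i : V))⟫ ≤ C₂ * ⟪A v, v⟫) :
    (∀ μ : ℝ, Module.End.HasEigenvalue (∑ i, P i : V →ₗ[ℝ] V) μ →
      C₂⁻¹ ≤ μ ∧ μ ≤ C₁) ∧
    (∀ μ₁ μ₂ : ℝ, Module.End.HasEigenvalue (∑ i, P i : V →ₗ[ℝ] V) μ₁ →
      Module.End.HasEigenvalue (∑ i, P i : V →ₗ[ℝ] V) μ₂ →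
      μ₁ / μ₂ ≤ C₁ * C₂) := by
  have ha_nonneg : ∀ u : V, 0 ≤ ⟪A u, u⟫ := by
    intro u
    rcases eq_or_ne u 0 with h | h
    · simp [h]
    · exact (hApos u h).le
  have ha_symm : ∀ u w : V, ⟪A u, w⟫ = ⟪A w, u⟫ := by
    intro u w
    rw [hAsym, real_inner_comm]
  have hCS : ∀ u w : V, ⟪A u, w⟫ ^ 2 ≤ ⟪A u, u⟫ * ⟪A w, w⟫ := by
    intro u w
    rcases eq_or_ne w 0 with h | h
    · simp [h]
    · have hq := hApos w h
      have h0 := ha_nonneg (⟪A w, w⟫ • u - ⟪A u, w⟫ • w)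
      have hexp : ⟪A (⟪A w, w⟫ • u - ⟪A u, w⟫ • w), ⟪A w, w⟫ • u - ⟪A u, w⟫ • w⟫
          = ⟪A w, w⟫ * (⟪A w, w⟫ * ⟪A u, u⟫ - ⟪A u, w⟫ ^ 2) := by
        simp only [map_sub, map_smul, inner_sub_left, inner_sub_right,
          real_inner_smul_left, real_inner_smul_right]
        rw [ha_symm w u]
        ring
      rw [hexp] at h0
      nlinarith [h0, hq]
  have key : ∀ μ : ℝ, Module.End.HasEigenvalue (∑ i, P i : V →ₗ[ℝ] V) μ →
      C₂⁻¹ ≤ μ ∧ μ ≤ C₁ := by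
    intro μ hμ
    obtain ⟨v, hv⟩ := hμ.exists_hasEigenvector
    have hv0 : v ≠ 0 := hv.right
    have hTv : (∑ i, P i : V →ₗ[ℝ] V) v = μ • v := hv.apply_eq_smul
    have hTv' : ∑ i, P i v = μ • v := by
      rw [← hTv]; simp [LinearMap.sum_apply]
    have ht : 0 < ⟪A v, v⟫ := hApos v hv0
    set t := ⟪A v, v⟫ with htdef
    set p : Fin (J+1) → ℝ := fun i => ⟪A (P i v), P i v⟫ with hp
    have hpi : ∀ i, ⟪A (P i v), v⟫ = p i := by
      intro i
      have h1 := hPorth i v (P i v) (hPrange i v)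
      have h2 : ⟪A (P i v), P i v⟫ = ⟪A v, P i v⟫ := by
        rw [map_sub, inner_sub_left, sub_eq_zero] at h1
        exact h1
      rw [hp]; dsimp only
      rw [h2, ha_symm]
    have hpnn : ∀ i, 0 ≤ p i := fun i => ha_nonneg _
    have hS : ∑ i, p i = μ * t := by
      have h1 : ∑ i, p i = ⟪A (∑ i, P i v), v⟫ := by
        rw [map_sum, sum_inner]
        exact (Finset.sum_congr rfl fun i _ => hpi i).symm
      rw [h1, hTv', map_smul, real_inner_smul_left]
    -- lower bound
    obtain ⟨w, hwsum, hwbound⟩ := hstable v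
    set q : Fin (J+1) → ℝ := fun i => ⟪A (w i : V), (w i : V)⟫ with hq
    have hqnn : ∀ i, 0 ≤ q i := fun i => ha_nonneg _
    have hts : t = ∑ i, ⟪A (P i v), (w i : V)⟫ := by
      have h1 : ∀ i, ⟪A (P i v), (w i : V)⟫ = ⟪A v, (w i : V)⟫ := by
        intro i
        have h2 := hPorth i v (w i) (w i).2
        rw [map_sub, inner_sub_left, sub_eq_zero] at h2
        exact h2
      rw [Finset.sum_congr rfl fun i _ => h1 i, ← inner_sum, hwsum]
    have hpw : ∀ i, ⟪A (P i v), (w i : V)⟫ ≤ Real.sqrt (p i) * Real.sqrt (q i) := by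
      intro i
      have h1 := hCS (P i v) (w i : V)
      have h2 : ⟪A (P i v), (w i : V)⟫ ≤ Real.sqrt (⟪A (P i v), (w i : V)⟫ ^ 2) := by
        rw [Real.sqrt_sq_eq_abs]; exact le_abs_self _
      calc ⟪A (P i v), (w i : V)⟫ ≤ Real.sqrt (⟪A (P i v), (w i : V)⟫ ^ 2) := h2
        _ ≤ Real.sqrt (p i * q i) := Real.sqrt_le_sqrt h1
        _ = Real.sqrt (p i) * Real.sqrt (q i) := Real.sqrt_mul (hpnn i) _
    have hsum_le : t ≤ ∑ i, Real.sqrt (p i) * Real.sqrt (q i) := by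
      rw [hts]; exact Finset.sum_le_sum fun i _ => hpw i
    have hcs2 : (∑ i, Real.sqrt (p i) * Real.sqrt (q i)) ^ 2 ≤
        (∑ i, p i) * (∑ i, q i) := by
      calc (∑ i, Real.sqrt (p i) * Real.sqrt (q i)) ^ 2
          ≤ (∑ i, Real.sqrt (p i) ^ 2) * (∑ i, Real.sqrt (q i) ^ 2) :=
            Finset.sum_mul_sq_le_sq_mul_sq Finset.univ _ _
        _ = (∑ i, p i) * (∑ i, q i) := by
            rw [Finset.sum_congr rfl fun i _ => Real.sq_sqrt (hpnn i),
              Finset.sum_congr rfl fun i _ => Real.sq_sqrt (hqnn i)]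
    have hsnn : 0 ≤ ∑ i, Real.sqrt (p i) * Real.sqrt (q i) :=
      Finset.sum_nonneg fun i _ => mul_nonneg (Real.sqrt_nonneg _) (Real.sqrt_nonneg _)
    have ht2 : t ^ 2 ≤ (μ * t) * (C₂ * t) := by
      have h1 : t ^ 2 ≤ (∑ i, Real.sqrt (p i) * Real.sqrt (q i)) ^ 2 := by
        nlinarith [hsum_le, ht.le]
      have h2 : (∑ i, p i) * (∑ i, q i) ≤ (μ * t) * (C₂ * t) := by
        have hSnn : 0 ≤ μ * t := hS ▸ Finset.sum_nonneg fun i _ => hpnn i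
        rw [hS]
        exact mul_le_mul_of_nonneg_left hwbound hSnn
      linarith [h1, hcs2]
    have hlow : C₂⁻¹ ≤ μ := by
      have h1 : 1 ≤ μ * C₂ := by nlinarith [ht2, mul_pos ht ht]
      rw [inv_eq_one_div, div_le_iff₀ hC₂]
      exact h1
    refine ⟨hlow, ?_⟩
    -- upper bound
    have hμpos : 0 < μ := lt_of_lt_of_le (inv_pos.mpr hC₂) hlow
    have hup := hupper (fun i => ⟨P i v, hPrange i v⟩)
    simp only at hup
    rw [hTv'] at hup
    have hup' : μ ^ 2 * t ≤ C₁ * (μ * t) := by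
      rw [map_smul, real_inner_smul_left, real_inner_smul_right] at hup
      rw [← hS]
      nlinarith [hup]
    nlinarith [hup', mul_pos hμpos ht]
  refine ⟨key, ?_⟩
  intro μ₁ μ₂ h₁ h₂
  obtain ⟨hl₁, hu₁⟩ := key μ₁ h₁
  obtain ⟨hl₂, hu₂⟩ := key μ₂ h₂
  have hμ₂pos : 0 < μ₂ := lt_of_lt_of_le (inv_pos.mpr hC₂) hl₂
  rw [div_le_iff₀ hμ₂pos]
  have h3 : C₁ * C₂ * C₂⁻¹ ≤ C₁ * C₂ * μ₂ :=
    mul_le_mul_of_nonneg_left hl₂ (by positivity)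
  have h4 : C₁ * C₂ * C₂⁻¹ = C₁ := by field_simp
  linarith [h3, h4 ▸ h3, hu₁]
end

section
/- Let $V$ be a finite-dimensional real inner product space, $A : V \to V$ symmetric positive definite with bilinear form $a(u,v) = (Au,v)$, and let $V = \sum_{i=0}^J V_i$ be a subspace decomposition with symmetric positive definite smoothers $R_i : V_i \to V_i$. Define $B := \sum_{i=0}^J I_i R_i I_i^t$ where $I_i : V_i \to V$ is the inclusion and $I_i^t$ its adjoint. Then $B$ is symmetric positive definite, and for every $u \in V$, $(B^{-1} u, u) = \inf \{ \sum_{i=0}^J (R_i^{-1} u_i, u_i) : u_i \in V_i, \; \sum_{i=0}^J u_i = u \}$. -/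
open scoped RealInnerProductSpace

theorem stmt_4 {V : Type*} [NormedAddCommGroup V] [InnerProductSpace ℝ V]
    [FiniteDimensional ℝ V] (J : ℕ)
    (Vi : Fin (J + 1) → Submodule ℝ V)
    (R Rinv : ∀ i, Vi i →ₗ[ℝ] Vi i)
    (hRsym : ∀ i (u v : Vi i), ⟪R i u, v⟫ = ⟪u, R i v⟫)
    (hRpos : ∀ i (u : Vi i), u ≠ 0 → 0 < ⟪R i u, u⟫)
    (hRinv₁ : ∀ i, R i ∘ₗ Rinv i = LinearMap.id)
    (hRinv₂ : ∀ i, Rinv i ∘ₗ R i = LinearMap.id)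
    (hspan : ∀ v : V, ∃ w : ∀ i, Vi i, (∑ i, ((w i : V))) = v)
    (B : V →ₗ[ℝ] V)
    (hB : B = ∑ i, (Vi i).subtype ∘ₗ R i ∘ₗ LinearMap.adjoint (Vi i).subtype) :
    (∀ u v : V, ⟪B u, v⟫ = ⟪u, B v⟫) ∧
    (∀ u : V, u ≠ 0 → 0 < ⟪B u, u⟫) ∧
    (∀ u v : V, B v = u →
      IsGLB {c : ℝ | ∃ w : ∀ i, Vi i, (∑ i, ((w i : V))) = u ∧
        c = ∑ i, ⟪Rinv i (w i), w i⟫} ⟪v, u⟫) := by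
  set T : ∀ i, V →ₗ[ℝ] Vi i := fun i => LinearMap.adjoint (Vi i).subtype with hT
  have hTinner : ∀ i (x : V) (y : Vi i), ⟪T i x, y⟫ = ⟪x, (y : V)⟫ := by
    intro i x y
    simpa using LinearMap.adjoint_inner_left (Vi i).subtype y x
  have h₁ : ∀ i (x : Vi i), R i (Rinv i x) = x := by
    intro i x; simpa using LinearMap.congr_fun (hRinv₁ i) x
  have h₂ : ∀ i (x : Vi i), Rinv i (R i x) = x := by
    intro i x; simpa using LinearMap.congr_fun (hRinv₂ i) x
  have hRnn : ∀ i (x : Vi i), 0 ≤ ⟪R i x, x⟫ := by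
    intro i x
    by_cases h : x = 0
    · simp [h]
    · exact (hRpos i x h).le
  have hRinvnn : ∀ i (x : Vi i), 0 ≤ ⟪Rinv i x, x⟫ := by
    intro i x
    calc (0:ℝ) ≤ ⟪R i (Rinv i x), Rinv i x⟫ := hRnn i _
      _ = ⟪Rinv i x, x⟫ := by rw [real_inner_comm, h₁]
  have hBapp : ∀ u : V, B u = ∑ i, ((R i (T i u) : V)) := by
    intro u
    rw [hB]
    simp [LinearMap.sum_apply, LinearMap.comp_apply, hT]
  have hBinner : ∀ u w : V, ⟪B u, w⟫ = ∑ i, ⟪R i (T i u), T i w⟫ := by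
    intro u w
    rw [hBapp, sum_inner]
    refine Finset.sum_congr rfl fun i _ => ?_
    rw [real_inner_comm, ← hTinner i w (R i (T i u)), real_inner_comm]
  -- key quadratic inequality
  have key : ∀ i (t w : Vi i), 2 * ⟪t, w⟫ - ⟪t, R i t⟫ ≤ ⟪Rinv i w, w⟫ := by
    intro i t w
    have hnn : (0:ℝ) ≤ ⟪Rinv i (w - R i t), w - R i t⟫ := hRinvnn i _
    have e1 : ⟪Rinv i w, R i t⟫ = ⟪t, w⟫ := by
      rw [← hRsym i (Rinv i w) t, h₁, real_inner_comm]
    have hexp : ⟪Rinv i (w - R i t), w - R i t⟫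
        = ⟪Rinv i w, w⟫ - 2 * ⟪t, w⟫ + ⟪t, R i t⟫ := by
      rw [map_sub, h₂]
      rw [inner_sub_left, inner_sub_right, inner_sub_right, e1]
      ring
    linarith [hnn, hexp.symm.le]
  refine ⟨?_, ?_, ?_⟩
  · intro u v
    rw [hBinner u v, real_inner_comm, hBinner v u]
    refine Finset.sum_congr rfl fun i _ => ?_
    rw [hRsym, real_inner_comm]
  · intro u hu
    rw [hBinner]
    have hex : ∃ i, T i u ≠ 0 := by
      by_contra h
      push_neg at h
      obtain ⟨w, hw⟩ := hspan u
      apply hu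
      have : ⟪u, u⟫ = 0 := by
        calc ⟪u, u⟫ = ⟪u, ∑ i, ((w i : V))⟫ := by rw [hw]
          _ = ∑ i, ⟪u, (w i : V)⟫ := inner_sum _ _ _
          _ = ∑ i, ⟪T i u, w i⟫ := by
              exact Finset.sum_congr rfl fun i _ => (hTinner i u (w i)).symm
          _ = 0 := by simp [h]
      exact inner_self_eq_zero.mp this
    obtain ⟨i, hi⟩ := hex
    refine Finset.sum_pos' (fun j _ => hRnn j _) ⟨i, Finset.mem_univ i, ?_⟩
    exact hRpos i _ hi
  · intro u v huv
    have hmem : ⟪v, u⟫ ∈ {c : ℝ | ∃ w : ∀ i, Vi i, (∑ i, ((w i : V))) = u ∧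
        c = ∑ i, ⟪Rinv i (w i), w i⟫} := by
      refine ⟨fun i => R i (T i v), ?_, ?_⟩
      · rw [← hBapp, huv]
      · calc ⟪v, u⟫ = ⟪B v, v⟫ := by rw [huv, real_inner_comm]
          _ = ∑ i, ⟪R i (T i v), T i v⟫ := hBinner v v
          _ = ∑ i, ⟪Rinv i (R i (T i v)), R i (T i v)⟫ := by
              refine Finset.sum_congr rfl fun i _ => ?_
              rw [h₂, real_inner_comm]
    have hlb : ⟪v, u⟫ ∈ lowerBounds {c : ℝ | ∃ w : ∀ i, Vi i, (∑ i, ((w i : V))) = u ∧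
        c = ∑ i, ⟪Rinv i (w i), w i⟫} := by
      rintro c ⟨w, hw, rfl⟩
      have hs1 : ∑ i, ⟪T i v, w i⟫ = ⟪v, u⟫ := by
        calc ∑ i, ⟪T i v, w i⟫ = ∑ i, ⟪v, (w i : V)⟫ :=
              Finset.sum_congr rfl fun i _ => hTinner i v (w i)
          _ = ⟪v, ∑ i, ((w i : V))⟫ := (inner_sum _ _ _).symm
          _ = ⟪v, u⟫ := by rw [hw]
      have hs2 : ∑ i, ⟪T i v, R i (T i v)⟫ = ⟪v, u⟫ := by
        calc ∑ i, ⟪T i v, R i (T i v)⟫ = ∑ i, ⟪R i (T i v), T i v⟫ :=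
              Finset.sum_congr rfl fun i _ => real_inner_comm _ _
          _ = ⟪B v, v⟫ := (hBinner v v).symm
          _ = ⟪v, u⟫ := by rw [huv, real_inner_comm]
      have hsum : ∑ i, (2 * ⟪T i v, w i⟫ - ⟪T i v, R i (T i v)⟫)
          ≤ ∑ i, ⟪Rinv i (w i), w i⟫ :=
        Finset.sum_le_sum fun i _ => key i (T i v) (w i)
      rw [Finset.sum_sub_distrib, ← Finset.mul_sum, hs1, hs2] at hsum
      linarith
    exact ⟨hlb, fun b hb => hb hmem⟩
end

section
/- Let $V$ be a finite-dimensional real vector space with two inner products: the $L^2$-type inner product $(\cdot,\cdot)_0$ with norm $\|\cdot\|_0$, and the energy form $a(\cdot,\cdot)$ with norm $\|\cdot\|_A$, where $a$ is symmetric positive definite. Fix a basis $(T_1,\ldots,T_n)$ of $V$, positive reals $h > 0$, and constants $c_1, c_2, c_3, c_4 > 0$ such that: (i) $c_1 h^d \sum_k \eta_k^2 \le \|\sum_k \eta_k T_k\|_0^2 \le c_2 h^d \sum_k \eta_k^2$ for all coefficients $\eta$ (mass matrix spectral equivalence with identity, up to scaling $h^d$); and (ii) $c_3 h^{-2} \|T_k\|_0^2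 \le \|T_k\|_A^2 \le c_4 h^{-2} \|T_k\|_0^2$ for each basis function $T_k$. Then the Jacobi smoother in this basis, defined by $(R^{-1}u,u) := \sum_k \eta_k^2\, a(T_k,T_k)$ for $u = \sum_k \eta_k T_k$, satisfies $c\, h^{-2}\|u\|_0^2 \le (R^{-1}u,u) \le C\, h^{-2}\|u\|_0^2$ for all $u \in V$, with $c = c_1 c_3 / c_2$ and $C = c_2 c_4 / c_1$. -/
theorem stmt_8 {V : Type*} [NormedAddCommGroup V] [InnerProductSpace ℝ V]
    (n d : ℕ) (T : Fin n → V)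
    (a : V →ₗ[ℝ] V →ₗ[ℝ] ℝ)
    (hasym : ∀ u w, a u w = a w u) (hapos : ∀ u, u ≠ 0 → 0 < a u u)
    (h : ℝ) (hh : 0 < h)
    (c₁ c₂ c₃ c₄ : ℝ) (hc₁ : 0 < c₁) (hc₂ : 0 < c₂) (hc₃ : 0 < c₃) (hc₄ : 0 < c₄)
    (hmass : ∀ η : Fin n → ℝ,
      c₁ * h ^ d * ∑ k, η k ^ 2 ≤ ‖∑ k, η k • T k‖ ^ 2 ∧
      ‖∑ k, η k • T k‖ ^ 2 ≤ c₂ * h ^ d * ∑ k, η k ^ 2)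
    (hinv : ∀ k, c₃ * (h ^ 2)⁻¹ * ‖T k‖ ^ 2 ≤ a (T k) (T k) ∧
      a (T k) (T k) ≤ c₄ * (h ^ 2)⁻¹ * ‖T k‖ ^ 2) :
    ∀ η : Fin n → ℝ,
      (c₁ * c₃ / c₂) * (h ^ 2)⁻¹ * ‖∑ k, η k • T k‖ ^ 2 ≤
          ∑ k, η k ^ 2 * a (T k) (T k) ∧
      ∑ k, η k ^ 2 * a (T k) (T k) ≤
          (c₂ * c₄ / c₁) * (h ^ 2)⁻¹ * ‖∑ k, η k • T k‖ ^ 2 := by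
  have hh2 : (0:ℝ) < h ^ 2 := by positivity
  have hhi : (0:ℝ) < (h ^ 2)⁻¹ := by positivity
  have hhd : (0:ℝ) < h ^ d := by positivity
  -- norm bounds for each basis vector
  have hT : ∀ k, c₁ * h ^ d ≤ ‖T k‖ ^ 2 ∧ ‖T k‖ ^ 2 ≤ c₂ * h ^ d := by
    intro k
    have hm := hmass (Pi.single k 1)
    have e1 : ∑ j, (Pi.single k 1 : Fin n → ℝ) j ^ 2 = 1 := by
      simp [Pi.single_apply, sq, ite_and]
    have e2 : ∑ j, (Pi.single k 1 : Fin n → ℝ) j • T j = T k := by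
      simp [Pi.single_apply, ite_smul]
    rw [e1, e2] at hm; simpa using hm

  intro η
  have hη : ∀ k, (0:ℝ) ≤ η k ^ 2 := fun k => sq_nonneg _
  have hS : (0:ℝ) ≤ ∑ k, η k ^ 2 := Finset.sum_nonneg fun k _ => sq_nonneg _
  have hm := hmass η
  have hlow : c₁ * c₃ * ((h ^ 2)⁻¹ * (h ^ d * ∑ k, η k ^ 2)) ≤
      ∑ k, η k ^ 2 * a (T k) (T k) := by
    have : ∑ k, η k ^ 2 * (c₁ * c₃ * ((h ^ 2)⁻¹ * h ^ d)) ≤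
        ∑ k, η k ^ 2 * a (T k) (T k) := by
      apply Finset.sum_le_sum
      intro k _
      have h1 := (hinv k).1
      have h2 := (hT k).1
      have : c₁ * c₃ * ((h ^ 2)⁻¹ * h ^ d) ≤ a (T k) (T k) := by
        calc c₁ * c₃ * ((h ^ 2)⁻¹ * h ^ d) = c₃ * (h ^ 2)⁻¹ * (c₁ * h ^ d) := by ring
        _ ≤ c₃ * (h ^ 2)⁻¹ * ‖T k‖ ^ 2 := by
            apply mul_le_mul_of_nonneg_left h2 (by positivity)
        _ ≤ a (T k) (T k) := h1
      exact mul_le_mul_of_nonneg_left this (hη k)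
    calc c₁ * c₃ * ((h ^ 2)⁻¹ * (h ^ d * ∑ k, η k ^ 2))
        = ∑ k, η k ^ 2 * (c₁ * c₃ * ((h ^ 2)⁻¹ * h ^ d)) := by
          rw [← Finset.sum_mul]; ring
      _ ≤ _ := this
  have hhigh : ∑ k, η k ^ 2 * a (T k) (T k) ≤
      c₂ * c₄ * ((h ^ 2)⁻¹ * (h ^ d * ∑ k, η k ^ 2)) := by
    have : ∑ k, η k ^ 2 * a (T k) (T k) ≤
        ∑ k, η k ^ 2 * (c₂ * c₄ * ((h ^ 2)⁻¹ * h ^ d)) := by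
      apply Finset.sum_le_sum
      intro k _
      have h1 := (hinv k).2
      have h2 := (hT k).2
      have : a (T k) (T k) ≤ c₂ * c₄ * ((h ^ 2)⁻¹ * h ^ d) := by
        calc a (T k) (T k) ≤ c₄ * (h ^ 2)⁻¹ * ‖T k‖ ^ 2 := h1
        _ ≤ c₄ * (h ^ 2)⁻¹ * (c₂ * h ^ d) := by
            apply mul_le_mul_of_nonneg_left h2 (by positivity)
        _ = c₂ * c₄ * ((h ^ 2)⁻¹ * h ^ d) := by ring
      exact mul_le_mul_of_nonneg_left this (hη k)
    calc ∑ k, η k ^ 2 * a (T k) (T k) ≤ _ := this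
      _ = c₂ * c₄ * ((h ^ 2)⁻¹ * (h ^ d * ∑ k, η k ^ 2)) := by
          rw [← Finset.sum_mul]; ring
  constructor
  · have hN := hm.2
    calc (c₁ * c₃ / c₂) * (h ^ 2)⁻¹ * ‖∑ k, η k • T k‖ ^ 2
        ≤ (c₁ * c₃ / c₂) * (h ^ 2)⁻¹ * (c₂ * h ^ d * ∑ k, η k ^ 2) := by
          apply mul_le_mul_of_nonneg_left hN (by positivity)
      _ = c₁ * c₃ * ((h ^ 2)⁻¹ * (h ^ d * ∑ k, η k ^ 2)) := by
          field_simp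
      _ ≤ _ := hlow
  · have hN := hm.1
    calc ∑ k, η k ^ 2 * a (T k) (T k)
        ≤ c₂ * c₄ * ((h ^ 2)⁻¹ * (h ^ d * ∑ k, η k ^ 2)) := hhigh
      _ = (c₂ * c₄ / c₁) * (h ^ 2)⁻¹ * (c₁ * h ^ d * ∑ k, η k ^ 2) := by
          field_simp
      _ ≤ (c₂ * c₄ / c₁) * (h ^ 2)⁻¹ * ‖∑ k, η k • T k‖ ^ 2 := by
          apply mul_le_mul_of_nonneg_left hN (by positivity)
end

section
/- Let $0 < \gamma < 1$ and let $(h_i)_{i=0}^L$ be positive reals with $h_i = \gamma^i$. Suppose $(u_i)_{i=0}^L$ and $(v_j)_{j=0}^L$ are elements of a real inner product space with bilinear form $a$, and suppose there is $C > 0$ such that for all $0 \le i < j \le L$, $|a(u_i, v_j)| \le C\, \gamma^{(j-i)/2}\, \|u_i\|_A\, h_j^{-1} \|v_j\|_0$, where $\|u\|_A^2 = a(u,u)$ and $\|\cdot\|_0$ is some norm. Then $\left|\sum_{i=0}^L \sum_{j=i+1}^L a(u_i, v_j)\right| \le \frac{2C}{1-\sqrt{\gamma}} \left(\sum_{i=0}^L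 \|u_i\|_A^2\right)^{1/2} \left(\sum_{j=0}^L h_j^{-2} \|v_j\|_0^2\right)^{1/2}$. -/
open Finset

lemma geom_any (r : ℝ) (h0 : 0 ≤ r) (h1 : r < 1) (s : Finset ℕ) :
    ∑ k ∈ s, r ^ k ≤ (1 - r)⁻¹ := by
  obtain ⟨n, hn⟩ := s.exists_nat_subset_range
  have h2 : ∑ k ∈ s, r ^ k ≤ ∑ k ∈ Finset.range n, r ^ k :=
    Finset.sum_le_sum_of_subset_of_nonneg hn (fun k _ _ => by positivity)
  refine h2.trans ?_
  rw [geom_sum_eq (by linarith : r ≠ 1)]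
  have hrn : 0 ≤ r ^ n := by positivity
  have h3 : r - 1 < 0 := by linarith
  rw [div_le_iff_of_neg h3]
  have key : (1 - r)⁻¹ * (1 - r) = 1 := inv_mul_cancel₀ (by linarith)
  nlinarith [key, hrn]

lemma sum_swap_tri (L : ℕ) (F : ℕ → ℕ → ℝ) :
    ∑ i ∈ Finset.range (L + 1), ∑ j ∈ Finset.Icc (i + 1) L, F i j
      = ∑ j ∈ Finset.range (L + 1), ∑ i ∈ Finset.range j, F i j := by
  rw [Finset.sum_sigma', Finset.sum_sigma']
  refine Finset.sum_nbij' (fun p => ⟨p.2, p.1⟩) (fun p => ⟨p.2, p.1⟩) ?_ ?_ ?_ ?_ ?_ <;>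
    simp only [Finset.mem_sigma, Finset.mem_range, Finset.mem_Icc, Sigma.forall] <;>
    intros <;> first | omega | trivial

set_option maxHeartbeats 1000000 in



theorem stmt_9 {V : Type*} [AddCommGroup V] [Module ℝ V]
    (L : ℕ) (γ C : ℝ) (hγ0 : 0 < γ) (hγ1 : γ < 1) (hC : 0 < C)
    (a : V →ₗ[ℝ] V →ₗ[ℝ] ℝ) (hpsd : ∀ w, 0 ≤ a w w)
    (norm0 : V → ℝ) (hnorm0 : ∀ w, 0 ≤ norm0 w)
    (u v : ℕ → V)
    (hpair : ∀ i j, i < j → j ≤ L →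
      |a (u i) (v j)| ≤ C * Real.sqrt γ ^ (j - i) * Real.sqrt (a (u i) (u i)) *
        ((γ ^ j)⁻¹ * norm0 (v j))) :
    |∑ i ∈ Finset.range (L + 1), ∑ j ∈ Finset.Icc (i + 1) L, a (u i) (v j)| ≤
      (2 * C / (1 - Real.sqrt γ)) *
        Real.sqrt (∑ i ∈ Finset.range (L + 1), a (u i) (u i)) *
        Real.sqrt (∑ j ∈ Finset.range (L + 1), ((γ ^ j)⁻¹) ^ 2 * norm0 (v j) ^ 2) := by

  set r := Real.sqrt γ with hr
  have hr0 : 0 ≤ r := Real.sqrt_nonneg γ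
  have hr1 : r < 1 := by
    rw [hr, show (1:ℝ) = Real.sqrt 1 from Real.sqrt_one.symm]
    exact Real.sqrt_lt_sqrt hγ0.le hγ1
  have hone : 0 < 1 - r := by linarith
  set x : ℕ → ℝ := fun i => Real.sqrt (a (u i) (u i)) with hxdef
  set y : ℕ → ℝ := fun j => (γ ^ j)⁻¹ * norm0 (v j) with hydef
  have hx0 : ∀ i, 0 ≤ x i := fun i => Real.sqrt_nonneg _
  have hy0 : ∀ j, 0 ≤ y j := fun j => mul_nonneg (by positivity) (hnorm0 _)
  set X := ∑ i ∈ Finset.range (L + 1), a (u i) (u i) with hX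
  set Y := ∑ j ∈ Finset.range (L + 1), ((γ ^ j)⁻¹) ^ 2 * norm0 (v j) ^ 2 with hY
  have hX0 : 0 ≤ X := Finset.sum_nonneg (fun i _ => hpsd _)
  have hY0 : 0 ≤ Y := Finset.sum_nonneg (fun j _ => by positivity)
  set T := ∑ i ∈ Finset.range (L + 1), ∑ j ∈ Finset.Icc (i + 1) L,
      r ^ (j - i) * x i * y j with hT
  -- Step 1
  have step1 : |∑ i ∈ Finset.range (L + 1), ∑ j ∈ Finset.Icc (i + 1) L, a (u i) (v j)|
      ≤ C * T := by
    calc |∑ i ∈ Finset.range (L + 1), ∑ j ∈ Finset.Icc (i + 1) L, a (u i) (v j)|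
        ≤ ∑ i ∈ Finset.range (L + 1), |∑ j ∈ Finset.Icc (i + 1) L, a (u i) (v j)| :=
          Finset.abs_sum_le_sum_abs _ _
      _ ≤ ∑ i ∈ Finset.range (L + 1), ∑ j ∈ Finset.Icc (i + 1) L, |a (u i) (v j)| :=
          Finset.sum_le_sum (fun i _ => Finset.abs_sum_le_sum_abs _ _)
      _ ≤ ∑ i ∈ Finset.range (L + 1), ∑ j ∈ Finset.Icc (i + 1) L,
            C * (r ^ (j - i) * x i * y j) := by
          refine Finset.sum_le_sum (fun i _ => Finset.sum_le_sum (fun j hj => ?_))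
          rw [Finset.mem_Icc] at hj
          have := hpair i j (by omega) hj.2
          calc |a (u i) (v j)| ≤ C * r ^ (j - i) * Real.sqrt (a (u i) (u i)) *
              ((γ ^ j)⁻¹ * norm0 (v j)) := this
            _ = C * (r ^ (j - i) * x i * y j) := by rw [hxdef, hydef]; ring
      _ = C * T := by
          rw [hT, Finset.mul_sum]
          exact Finset.sum_congr rfl (fun i _ => by rw [Finset.mul_sum])
  -- Step 2 : Cauchy-Schwarz on the sigma set
  set S := (Finset.range (L + 1)).sigma (fun i => Finset.Icc (i + 1) L) with hS
  have hTsig : T = ∑ p ∈ S, r ^ (p.2 - p.1) * x p.1 * y p.2 := by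
    rw [hT, hS, Finset.sum_sigma]
  have hT0 : 0 ≤ T := by
    rw [hTsig]
    exact Finset.sum_nonneg (fun p _ => by
      have := hx0 p.1; have := hy0 p.2; positivity)
  have hCS : T ^ 2 ≤ (∑ p ∈ S, r ^ (p.2 - p.1) * x p.1 ^ 2) *
      (∑ p ∈ S, r ^ (p.2 - p.1) * y p.2 ^ 2) := by
    rw [hTsig]
    refine Finset.sum_sq_le_sum_mul_sum_of_sq_eq_mul S
      (fun p _ => by have := hx0 p.1; positivity)
      (fun p _ => by have := hy0 p.2; positivity)
      (fun p _ => by ring)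
  -- bound the f-sum
  have hfsum : (∑ p ∈ S, r ^ (p.2 - p.1) * x p.1 ^ 2) ≤ (1 - r)⁻¹ * X := by
    rw [hS, Finset.sum_sigma, hX, Finset.mul_sum]
    refine Finset.sum_le_sum (fun i _ => ?_)
    have hxi : x i ^ 2 = a (u i) (u i) := Real.sq_sqrt (hpsd _)
    dsimp only
    rw [← Finset.sum_mul, ← hxi]
    refine mul_le_mul_of_nonneg_right ?_ (sq_nonneg _)
    have himg : ∑ j ∈ Finset.Icc (i + 1) L, r ^ (j - i)
        = ∑ k ∈ (Finset.Icc (i + 1) L).image (fun j => j - i), r ^ k := by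
      rw [Finset.sum_image (fun j1 h1 j2 h2 h => by
        rw [Finset.mem_coe, Finset.mem_Icc] at h1 h2; omega)]
    rw [himg]
    exact geom_any r hr0 hr1 _
  -- bound the g-sum
  have hgsum : (∑ p ∈ S, r ^ (p.2 - p.1) * y p.2 ^ 2) ≤ (1 - r)⁻¹ * Y := by
    rw [hS, Finset.sum_sigma]
    rw [sum_swap_tri L (fun i j => r ^ (j - i) * y j ^ 2)]
    have hYy : Y = ∑ j ∈ Finset.range (L + 1), y j ^ 2 := by
      rw [hY, hydef]
      exact Finset.sum_congr rfl (fun j _ => by rw [mul_pow])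
    rw [hYy, Finset.mul_sum]
    refine Finset.sum_le_sum (fun j _ => ?_)
    rw [← Finset.sum_mul]
    refine mul_le_mul_of_nonneg_right ?_ (sq_nonneg _)
    have himg : ∑ i ∈ Finset.range j, r ^ (j - i)
        = ∑ k ∈ (Finset.range j).image (fun i => j - i), r ^ k := by
      rw [Finset.sum_image (fun i1 h1 i2 h2 h => by
        rw [Finset.mem_coe, Finset.mem_range] at h1 h2; omega)]
    rw [himg]
    exact geom_any r hr0 hr1 _
  -- combine
  have hprod : (∑ p ∈ S, r ^ (p.2 - p.1) * x p.1 ^ 2) *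
      (∑ p ∈ S, r ^ (p.2 - p.1) * y p.2 ^ 2) ≤ ((1 - r)⁻¹ * X) * ((1 - r)⁻¹ * Y) := by
    refine mul_le_mul hfsum hgsum (Finset.sum_nonneg (fun p _ => by
      have := hy0 p.2; positivity)) (by positivity)
  have hT2 : T ^ 2 ≤ ((1 - r)⁻¹) ^ 2 * (X * Y) := by
    calc T ^ 2 ≤ _ := hCS
      _ ≤ ((1 - r)⁻¹ * X) * ((1 - r)⁻¹ * Y) := hprod
      _ = ((1 - r)⁻¹) ^ 2 * (X * Y) := by ring
  have hTle : T ≤ (1 - r)⁻¹ * (Real.sqrt X * Real.sqrt Y) := by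
    have h1 : ((1 - r)⁻¹ * (Real.sqrt X * Real.sqrt Y)) ^ 2
        = ((1 - r)⁻¹) ^ 2 * (X * Y) := by
      rw [mul_pow, mul_pow, Real.sq_sqrt hX0, Real.sq_sqrt hY0]
    have h2 : 0 ≤ (1 - r)⁻¹ * (Real.sqrt X * Real.sqrt Y) := by positivity
    nlinarith [hT2, h2, hT0]
  calc |∑ i ∈ Finset.range (L + 1), ∑ j ∈ Finset.Icc (i + 1) L, a (u i) (v j)|
      ≤ C * T := step1
    _ ≤ C * ((1 - r)⁻¹ * (Real.sqrt X * Real.sqrt Y)) :=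
        mul_le_mul_of_nonneg_left hTle hC.le
    _ ≤ (2 * C / (1 - r)) * Real.sqrt X * Real.sqrt Y := by
        rw [div_eq_mul_inv]
        have hs : 0 ≤ Real.sqrt X * Real.sqrt Y := by positivity
        have : C * (1 - r)⁻¹ ≤ 2 * C * (1 - r)⁻¹ := by
          have : 0 < (1 - r)⁻¹ := by positivity
          nlinarith
        nlinarith [hs, this]
end
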